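/- Let a > 0, let ξ be a positive integer, and let {r_t}_{t≥0} be a nonnegative real sequence satisfying r_{t+1} − r_t ≤ −a·α_t·r_t + ν_t for all integers t ≥ 0, where {α_t} and {ν_t} are nonnegative sequences with a·α_t ≤ 1 for all t. If α_t = 2/(a(t+ξ)), then for all integers t_0 ≥ 1 and T ≥ 1 (with t_0 ≤ T), r_T ≤ (t_0+ξ−1)²·r_{t_0}/(T+ξ−1)² + (∑_{t=0}^{T−1} ν_t·(t+ξ)²)/(T+ξ−1)². -/

import Mathlib

open Finset in
theorem aux_recursion_unroll (a : ℝ) (ha : 0 < a) (ξ : ℕ) (hξ : 1 ≤ ξ)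
    (r α ν : ℕ → ℝ)
    (hr : ∀ t : ℕ, 0 ≤ r t) (hα : ∀ t : ℕ, 0 ≤ α t) (hν : ∀ t : ℕ, 0 ≤ ν t)
    (hstep : ∀ t : ℕ, r (t + 1) - r t ≤ -a * α t * r t + ν t)
    (haα : ∀ t : ℕ, a * α t ≤ 1)
    (hαdef : ∀ t : ℕ, α t = 2 / (a * ((t : ℝ) + ξ)))
    (t₀ T : ℕ) (ht₀ : 1 ≤ t₀) (hT : 1 ≤ T) (h : t₀ ≤ T) :
    r T ≤ ((t₀ : ℝ) + ξ - 1) ^ 2 * r t₀ / ((T : ℝ) + ξ - 1) ^ 2 +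
      (∑ t ∈ Finset.range T, ν t * ((t : ℝ) + ξ) ^ 2) / ((T : ℝ) + ξ - 1) ^ 2 := by
  have hξ' : (1 : ℝ) ≤ (ξ : ℝ) := by exact_mod_cast hξ
  have key : ∀ t : ℕ, r (t + 1) * ((t : ℝ) + ξ) ^ 2 ≤
      ((t : ℝ) + ξ - 1) ^ 2 * r t + ν t * ((t : ℝ) + ξ) ^ 2 := by
    intro t
    obtain ⟨x, hxdef⟩ : ∃ x : ℝ, x = (t : ℝ) + ξ := ⟨_, rfl⟩
    rw [← hxdef]
    have hx : 1 ≤ x := by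
      have : (0 : ℝ) ≤ (t : ℝ) := Nat.cast_nonneg t
      linarith
    have hx0 : x ≠ 0 := by linarith
    have hstep' : r (t + 1) ≤ (1 - 2 / x) * r t + ν t := by
      have := hstep t
      rw [hαdef t, ← hxdef] at this
      have ha' : a ≠ 0 := ne_of_gt ha
      have : r (t + 1) - r t ≤ -(2 / x) * r t + ν t := by
        have heq : -a * (2 / (a * x)) = -(2 / x) := by field_simp
        rw [heq] at this; exact this
      linarith
    have h2 : (1 - 2 / x) * r t * x ^ 2 = (x ^ 2 - 2 * x) * r t := by
      field_simp
    have hmul : r (t + 1) * x ^ 2 ≤ ((1 - 2 / x) * r t + ν t) * x ^ 2 := by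
      apply mul_le_mul_of_nonneg_right hstep' (by positivity)
    have h3 : (x ^ 2 - 2 * x) * r t ≤ (x - 1) ^ 2 * r t := by
      apply mul_le_mul_of_nonneg_right _ (hr t)
      nlinarith
    have h4 : ((1 - 2 / x) * r t + ν t) * x ^ 2 = (x ^ 2 - 2 * x) * r t + ν t * x ^ 2 := by
      field_simp
    linarith
  -- induction
  have main : ∀ T : ℕ, t₀ ≤ T → r T * ((T : ℝ) + ξ - 1) ^ 2 ≤
      ((t₀ : ℝ) + ξ - 1) ^ 2 * r t₀ + ∑ t ∈ Finset.range T, ν t * ((t : ℝ) + ξ) ^ 2 := by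
    intro T hT'
    induction T, hT' using Nat.le_induction with
    | base =>
      have : 0 ≤ ∑ t ∈ Finset.range t₀, ν t * ((t : ℝ) + ξ) ^ 2 := by
        apply Finset.sum_nonneg; intro i _; exact mul_nonneg (hν i) (by positivity)
      nlinarith [hr t₀]
    | succ n hn ih =>
      have hk := key n
      have hcast : ((n + 1 : ℕ) : ℝ) + ξ - 1 = (n : ℝ) + ξ := by push_cast; ring
      rw [Finset.sum_range_succ, hcast]
      calc r (n + 1) * ((n : ℝ) + ξ) ^ 2
          ≤ ((n : ℝ) + ξ - 1) ^ 2 * r n + ν n * ((n : ℝ) + ξ) ^ 2 := hk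
        _ ≤ (((t₀ : ℝ) + ξ - 1) ^ 2 * r t₀ + ∑ t ∈ Finset.range n, ν t * ((t : ℝ) + ξ) ^ 2)
            + ν n * ((n : ℝ) + ξ) ^ 2 := by
            have : ((n : ℝ) + ξ - 1) ^ 2 * r n = r n * ((n : ℝ) + ξ - 1) ^ 2 := by ring
            rw [this]; linarith [ih]
        _ = _ := by ring
  have hM := main T h
  have hTpos : (0 : ℝ) < ((T : ℝ) + ξ - 1) ^ 2 := by
    have : (1 : ℝ) ≤ (T : ℝ) := by exact_mod_cast hT
    nlinarith
  rw [← add_div, le_div_iff₀ hTpos]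
  linarith
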